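/- Let v : [0,π] → ℂ be continuous and let λ ∈ ℂ with λ ≠ 0 and sin(λπ/2) ≠ 0. Define y(x) = −(1/(2λ sin(πλ/2)))·[ ∫₀^x cos λ(π/2 − x + t) v(t) dt + ∫ₓ^π cos λ(π/2 − t + x) v(t) dt ]. Then ∫₀^π y(x) conj(v(x)) dx = −(1/(4λ sin(λπ/2)))·{ e^{iλπ/2}·[ ṽ(−λ)ṽ*(−λ) − (1 − e^{-iλπ})Φ(−λ) ] + e^{-iλπ/2}·[ ṽ(λ)ṽ*(λ) − (1 − e^{iλπ})Φ(λ) ] }. -/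

import Mathlib

open MeasureTheory intervalIntegral

/-- Fourier transform `ṽ(λ) = ∫₀^π e^{-iλx} v(x) dx`. -/
noncomputable def ftilde (v : ℝ → ℂ) (l : ℂ) : ℂ :=
  ∫ x in (0:ℝ)..Real.pi, Complex.exp (-Complex.I * l * x) * v x

/-- `ṽ*(λ) = conj(ṽ(conj λ))`. -/
noncomputable def ftildeStar (v : ℝ → ℂ) (l : ℂ) : ℂ :=
  (starRingEnd ℂ) (ftilde v ((starRingEnd ℂ) l))

/-- `Φ(λ) = ∫₀^π (∫₀^x e^{-iλ(x−t)} conj(v(t)) dt) v(x) dx`. -/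
noncomputable def PhiFun (v : ℝ → ℂ) (l : ℂ) : ℂ :=
  ∫ x in (0:ℝ)..Real.pi,
    (∫ t in (0:ℝ)..x, Complex.exp (-Complex.I * l * (x - t)) * (starRingEnd ℂ) (v t)) * v x

/-- The resolvent of `L₀y = −y''` with periodic boundary conditions applied to `v`. -/
noncomputable def resolventFun (v : ℝ → ℂ) (l : ℂ) (x : ℝ) : ℂ :=
  -(1 / (2 * l * Complex.sin ((Real.pi : ℂ) * l / 2))) *
    ((∫ t in (0:ℝ)..x, Complex.cos (l * ((Real.pi : ℂ) / 2 - x + t)) * v t)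
      + ∫ t in x..Real.pi, Complex.cos (l * ((Real.pi : ℂ) / 2 - t + x)) * v t)

/-- primitive of `e^{-iμt} v(t)` -/
noncomputable def Qf (v : ℝ → ℂ) (μ : ℂ) (x : ℝ) : ℂ :=
  ∫ t in (0:ℝ)..x, Complex.exp (-Complex.I * μ * t) * v t

/-- primitive of `e^{iμt} conj(v(t))` -/
noncomputable def Pf (v : ℝ → ℂ) (μ : ℂ) (x : ℝ) : ℂ :=
  ∫ t in (0:ℝ)..x, Complex.exp (Complex.I * μ * t) * (starRingEnd ℂ) (v t)

lemma conj_intervalIntegral (f : ℝ → ℂ) (a b : ℝ) :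
    (∫ x in a..b, (starRingEnd ℂ) (f x)) = (starRingEnd ℂ) (∫ x in a..b, f x) := by
  simp only [intervalIntegral, ← integral_conj, map_sub]

section core

variable {v : ℝ → ℂ} (hv : Continuous v) (μ : ℂ)

include hv

lemma contQint : Continuous fun t : ℝ => Complex.exp (-Complex.I * μ * t) * v t :=
  (Complex.continuous_exp.comp (continuous_const.mul Complex.continuous_ofReal)).mul hv

lemma contPint : Continuous fun t : ℝ => Complex.exp (Complex.I * μ * t) * (starRingEnd ℂ) (v t) :=
  (Complex.continuous_exp.comp (continuous_const.mul Complex.continuous_ofReal)).mul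
    (continuous_star.comp hv)

lemma hQd (x : ℝ) : HasDerivAt (Qf v μ) (Complex.exp (-Complex.I * μ * x) * v x) x :=
  (((contQint hv μ)).integral_hasStrictDerivAt 0 x).hasDerivAt

lemma hPd (x : ℝ) :
    HasDerivAt (Pf v μ) (Complex.exp (Complex.I * μ * x) * (starRingEnd ℂ) (v x)) x :=
  (((contPint hv μ)).integral_hasStrictDerivAt 0 x).hasDerivAt

lemma hQc : Continuous (Qf v μ) :=
  continuous_iff_continuousAt.mpr fun x => (hQd hv μ x).continuousAt

lemma hPc : Continuous (Pf v μ) :=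
  continuous_iff_continuousAt.mpr fun x => (hPd hv μ x).continuousAt

lemma ftilde_eq : ftilde v μ = Qf v μ Real.pi := rfl

lemma ftildeStar_eq : ftildeStar v μ = Pf v μ Real.pi := by
  rw [ftildeStar, ftilde, ← conj_intervalIntegral, Pf]
  apply intervalIntegral.integral_congr
  intro x _
  simp only [map_mul, ← Complex.exp_conj, map_neg, Complex.conj_I, Complex.conj_ofReal,
    RingHomCompTriple.comp_apply, RingHom.id_apply, Complex.conj_conj]
  ring_nf

/-- Φ(μ) rewritten through the primitive `Pf`. -/
lemma Phi_eq : PhiFun v μ = ∫ x in (0:ℝ)..Real.pi, Complex.exp (-Complex.I * μ * x) * v x * Pf v μ x := by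
  rw [PhiFun]
  apply intervalIntegral.integral_congr
  intro x _
  have h1 : (∫ t in (0:ℝ)..x, Complex.exp (-Complex.I * μ * (x - t)) * (starRingEnd ℂ) (v t))
      = Complex.exp (-Complex.I * μ * x) * Pf v μ x := by
    rw [Pf, ← intervalIntegral.integral_const_mul]
    apply intervalIntegral.integral_congr
    intro t _
    beta_reduce
    rw [← mul_assoc, ← Complex.exp_add]
    congr 2
    push_cast; ring
  beta_reduce
  rw [h1]; ring

/-- Key FTC identity: `∫ e^{iμx} conj(v) Q = Q(π)P(π) − ∫ e^{-iμx} v P`. -/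
lemma star_key :
    (∫ x in (0:ℝ)..Real.pi, Complex.exp (Complex.I * μ * x) * (starRingEnd ℂ) (v x) * Qf v μ x)
      = Qf v μ Real.pi * Pf v μ Real.pi
        - ∫ x in (0:ℝ)..Real.pi, Complex.exp (-Complex.I * μ * x) * v x * Pf v μ x := by
  have i1 : IntervalIntegrable
      (fun x => Complex.exp (-Complex.I * μ * x) * v x * Pf v μ x) volume 0 Real.pi :=
    ((contQint hv μ).mul (hPc hv μ)).intervalIntegrable _ _
  have i2 : IntervalIntegrable
      (fun x => Complex.exp (Complex.I * μ * x) * (starRingEnd ℂ) (v x) * Qf v μ x)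
        volume 0 Real.pi :=
    ((contPint hv μ).mul (hQc hv μ)).intervalIntegrable _ _
  have h1 : ∀ x ∈ Set.uIcc (0:ℝ) Real.pi, HasDerivAt (fun y => Qf v μ y * Pf v μ y)
      (Complex.exp (-Complex.I * μ * x) * v x * Pf v μ x
        + Complex.exp (Complex.I * μ * x) * (starRingEnd ℂ) (v x) * Qf v μ x) x := by
    intro x _
    have : HasDerivAt (fun y => Qf v μ y * Pf v μ y) _ x := (hQd hv μ x).mul (hPd hv μ x)
    convert this using 1
    ring
  have h3 := intervalIntegral.integral_eq_sub_of_hasDerivAt h1 (i1.add i2)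
  rw [intervalIntegral.integral_add i1 i2] at h3
  have hQ0 : Qf v μ 0 = 0 := intervalIntegral.integral_same
  rw [hQ0, zero_mul, sub_zero] at h3
  linear_combination h3

/-- second key identity: the `J`-type integral equals Φ(μ). -/
lemma J_key :
    (∫ x in (0:ℝ)..Real.pi,
        Complex.exp (Complex.I * μ * x) * (starRingEnd ℂ) (v x) * (Qf v μ Real.pi - Qf v μ x))
      = PhiFun v μ := by
  have i2 : IntervalIntegrable
      (fun x => Complex.exp (Complex.I * μ * x) * (starRingEnd ℂ) (v x) * Qf v μ x)
        volume 0 Real.pi :=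
    ((contPint hv μ).mul (hQc hv μ)).intervalIntegrable _ _
  have i3 : IntervalIntegrable
      (fun x => Complex.exp (Complex.I * μ * x) * (starRingEnd ℂ) (v x) * Qf v μ Real.pi)
        volume 0 Real.pi :=
    ((contPint hv μ).mul continuous_const).intervalIntegrable _ _
  have hsplit : (∫ x in (0:ℝ)..Real.pi,
      Complex.exp (Complex.I * μ * x) * (starRingEnd ℂ) (v x) * (Qf v μ Real.pi - Qf v μ x))
      = (∫ x in (0:ℝ)..Real.pi,
          Complex.exp (Complex.I * μ * x) * (starRingEnd ℂ) (v x) * Qf v μ Real.pi)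
        - ∫ x in (0:ℝ)..Real.pi,
            Complex.exp (Complex.I * μ * x) * (starRingEnd ℂ) (v x) * Qf v μ x := by
    rw [← intervalIntegral.integral_sub i3 i2]
    apply intervalIntegral.integral_congr
    intro x _
    ring
  have hconst : (∫ x in (0:ℝ)..Real.pi,
      Complex.exp (Complex.I * μ * x) * (starRingEnd ℂ) (v x) * Qf v μ Real.pi)
      = Pf v μ Real.pi * Qf v μ Real.pi := by
    rw [intervalIntegral.integral_mul_const]
    rfl
  rw [hsplit, hconst, star_key hv μ, Phi_eq hv μ]
  ring

end core

theorem stmt13_cont (v : ℝ → ℂ) (hv : Continuous v)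
    (l : ℂ) (hl : l ≠ 0) (hs : Complex.sin (l * Real.pi / 2) ≠ 0) :
    ∫ x in (0:ℝ)..Real.pi, resolventFun v l x * (starRingEnd ℂ) (v x)
      = -(1 / (4 * l * Complex.sin (l * Real.pi / 2))) *
        (Complex.exp (Complex.I * l * Real.pi / 2) *
            (ftilde v (-l) * ftildeStar v (-l)
              - (1 - Complex.exp (-Complex.I * l * Real.pi)) * PhiFun v (-l))
          + Complex.exp (-Complex.I * l * Real.pi / 2) *
            (ftilde v l * ftildeStar v l
              - (1 - Complex.exp (Complex.I * l * Real.pi)) * PhiFun v l)) := by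
  have hcv : Continuous fun x : ℝ => (starRingEnd ℂ) (v x) := continuous_star.comp hv
  have hco : ∀ μ : ℂ, Continuous fun x : ℝ => Complex.exp (Complex.I * μ * x) :=
    fun μ => Complex.continuous_exp.comp (continuous_const.mul Complex.continuous_ofReal)
  set e1 := Complex.exp (Complex.I * l * Real.pi / 2) with he1
  set e2 := Complex.exp (-Complex.I * l * Real.pi / 2) with he2
  -- the four building blocks
  set F1 : ℝ → ℂ := fun x =>
    Complex.exp (Complex.I * -l * x) * (starRingEnd ℂ) (v x) * Qf v (-l) x with hF1def
  set F2 : ℝ → ℂ := fun x =>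
    Complex.exp (Complex.I * l * x) * (starRingEnd ℂ) (v x) * Qf v l x with hF2def
  set F3 : ℝ → ℂ := fun x =>
    Complex.exp (Complex.I * l * x) * (starRingEnd ℂ) (v x)
      * (Qf v l Real.pi - Qf v l x) with hF3def
  set F4 : ℝ → ℂ := fun x =>
    Complex.exp (Complex.I * -l * x) * (starRingEnd ℂ) (v x)
      * (Qf v (-l) Real.pi - Qf v (-l) x) with hF4def
  have hF1c : Continuous F1 := ((hco (-l)).mul hcv).mul (hQc hv (-l))
  have hF2c : Continuous F2 := ((hco l).mul hcv).mul (hQc hv l)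
  have hF3c : Continuous F3 := ((hco l).mul hcv).mul (continuous_const.sub (hQc hv l))
  have hF4c : Continuous F4 := ((hco (-l)).mul hcv).mul (continuous_const.sub (hQc hv (-l)))
  -- Step 1 : pull out the constant
  have hstep1 : (∫ x in (0:ℝ)..Real.pi, resolventFun v l x * (starRingEnd ℂ) (v x))
      = -(1 / (2 * l * Complex.sin ((Real.pi : ℂ) * l / 2))) *
        ∫ x in (0:ℝ)..Real.pi,
          ((∫ t in (0:ℝ)..x, Complex.cos (l * ((Real.pi : ℂ) / 2 - x + t)) * v t)
            + ∫ t in x..Real.pi, Complex.cos (l * ((Real.pi : ℂ) / 2 - t + x)) * v t)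
              * (starRingEnd ℂ) (v x) := by
    rw [← intervalIntegral.integral_const_mul]
    apply intervalIntegral.integral_congr
    intro x _
    beta_reduce
    rw [resolventFun]
    ring
  -- Step 2 : pointwise expansion
  have hpt : Set.EqOn
      (fun x : ℝ => ((∫ t in (0:ℝ)..x, Complex.cos (l * ((Real.pi : ℂ) / 2 - x + t)) * v t)
            + ∫ t in x..Real.pi, Complex.cos (l * ((Real.pi : ℂ) / 2 - t + x)) * v t)
              * (starRingEnd ℂ) (v x))
      (fun x : ℝ => (2⁻¹ * e1) * F1 x + (2⁻¹ * e1) * F3 x + (2⁻¹ * e2) * F2 x + (2⁻¹ * e2) * F4 x)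
      (Set.uIcc (0:ℝ) Real.pi) := by
    intro x _
    beta_reduce
    have hA : (∫ t in (0:ℝ)..x, Complex.cos (l * ((Real.pi : ℂ) / 2 - x + t)) * v t)
        = 2⁻¹ * e1 * (Complex.exp (Complex.I * -l * x) * Qf v (-l) x)
          + 2⁻¹ * e2 * (Complex.exp (Complex.I * l * x) * Qf v l x) := by
      have i1 : IntervalIntegrable (fun t : ℝ =>
          (2⁻¹ * e1 * Complex.exp (Complex.I * -l * x))
            * (Complex.exp (-Complex.I * -l * t) * v t)) volume 0 x :=
        (continuous_const.mul (contQint hv (-l))).intervalIntegrable _ _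
      have i2 : IntervalIntegrable (fun t : ℝ =>
          (2⁻¹ * e2 * Complex.exp (Complex.I * l * x))
            * (Complex.exp (-Complex.I * l * t) * v t)) volume 0 x :=
        (continuous_const.mul (contQint hv l)).intervalIntegrable _ _
      have hcongr : (∫ t in (0:ℝ)..x, Complex.cos (l * ((Real.pi : ℂ) / 2 - x + t)) * v t)
          = ∫ t in (0:ℝ)..x,
              ((2⁻¹ * e1 * Complex.exp (Complex.I * -l * x))
                  * (Complex.exp (-Complex.I * -l * t) * v t)
                + (2⁻¹ * e2 * Complex.exp (Complex.I * l * x))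
                  * (Complex.exp (-Complex.I * l * t) * v t)) := by
        apply intervalIntegral.integral_congr
        intro t _
        beta_reduce
        rw [Complex.cos]
        have ea : Complex.exp (l * ((Real.pi : ℂ) / 2 - x + t) * Complex.I)
            = e1 * (Complex.exp (Complex.I * -l * x) * Complex.exp (-Complex.I * -l * t)) := by
          rw [he1, ← Complex.exp_add, ← Complex.exp_add]
          congr 1
          ring
        have eb : Complex.exp (-(l * ((Real.pi : ℂ) / 2 - x + t)) * Complex.I)
            = e2 * (Complex.exp (Complex.I * l * x) * Complex.exp (-Complex.I * l * t)) := by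
          rw [he2, ← Complex.exp_add, ← Complex.exp_add]
          congr 1
          ring
        rw [ea, eb]
        ring
      rw [hcongr, intervalIntegral.integral_add i1 i2, intervalIntegral.integral_const_mul,
        intervalIntegral.integral_const_mul,
        show (∫ t in (0:ℝ)..x, Complex.exp (-Complex.I * -l * t) * v t) = Qf v (-l) x from rfl,
        show (∫ t in (0:ℝ)..x, Complex.exp (-Complex.I * l * t) * v t) = Qf v l x from rfl]
      ring
    have hB : (∫ t in x..Real.pi, Complex.cos (l * ((Real.pi : ℂ) / 2 - t + x)) * v t)
        = 2⁻¹ * e1 * (Complex.exp (Complex.I * l * x) * (Qf v l Real.pi - Qf v l x))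
          + 2⁻¹ * e2 * (Complex.exp (Complex.I * -l * x)
              * (Qf v (-l) Real.pi - Qf v (-l) x)) := by
      have i1 : IntervalIntegrable (fun t : ℝ =>
          (2⁻¹ * e1 * Complex.exp (Complex.I * l * x))
            * (Complex.exp (-Complex.I * l * t) * v t)) volume x Real.pi :=
        (continuous_const.mul (contQint hv l)).intervalIntegrable _ _
      have i2 : IntervalIntegrable (fun t : ℝ =>
          (2⁻¹ * e2 * Complex.exp (Complex.I * -l * x))
            * (Complex.exp (-Complex.I * -l * t) * v t)) volume x Real.pi :=
        (continuous_const.mul (contQint hv (-l))).intervalIntegrable _ _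
      have hsub1 : (∫ t in x..Real.pi, Complex.exp (-Complex.I * l * t) * v t)
          = Qf v l Real.pi - Qf v l x :=
        (intervalIntegral.integral_interval_sub_left
          ((contQint hv l).intervalIntegrable _ _)
          ((contQint hv l).intervalIntegrable _ _)).symm
      have hsub2 : (∫ t in x..Real.pi, Complex.exp (-Complex.I * -l * t) * v t)
          = Qf v (-l) Real.pi - Qf v (-l) x :=
        (intervalIntegral.integral_interval_sub_left
          ((contQint hv (-l)).intervalIntegrable _ _)
          ((contQint hv (-l)).intervalIntegrable _ _)).symm
      have hcongr : (∫ t in x..Real.pi, Complex.cos (l * ((Real.pi : ℂ) / 2 - t + x)) * v t)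
          = ∫ t in x..Real.pi,
              ((2⁻¹ * e1 * Complex.exp (Complex.I * l * x))
                  * (Complex.exp (-Complex.I * l * t) * v t)
                + (2⁻¹ * e2 * Complex.exp (Complex.I * -l * x))
                  * (Complex.exp (-Complex.I * -l * t) * v t)) := by
        apply intervalIntegral.integral_congr
        intro t _
        beta_reduce
        rw [Complex.cos]
        have ea : Complex.exp (l * ((Real.pi : ℂ) / 2 - t + x) * Complex.I)
            = e1 * (Complex.exp (Complex.I * l * x) * Complex.exp (-Complex.I * l * t)) := by
          rw [he1, ← Complex.exp_add, ← Complex.exp_add]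
          congr 1
          ring
        have eb : Complex.exp (-(l * ((Real.pi : ℂ) / 2 - t + x)) * Complex.I)
            = e2 * (Complex.exp (Complex.I * -l * x) * Complex.exp (-Complex.I * -l * t)) := by
          rw [he2, ← Complex.exp_add, ← Complex.exp_add]
          congr 1
          ring
        rw [ea, eb]
        ring
      rw [hcongr, intervalIntegral.integral_add i1 i2, intervalIntegral.integral_const_mul,
        intervalIntegral.integral_const_mul, hsub1, hsub2]
      ring
    rw [hA, hB, hF1def, hF2def, hF3def, hF4def]
    ring
  -- Step 3 : split the integral
  have hsum : (∫ x in (0:ℝ)..Real.pi,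
      ((∫ t in (0:ℝ)..x, Complex.cos (l * ((Real.pi : ℂ) / 2 - x + t)) * v t)
        + ∫ t in x..Real.pi, Complex.cos (l * ((Real.pi : ℂ) / 2 - t + x)) * v t)
          * (starRingEnd ℂ) (v x))
      = (2⁻¹ * e1) * (∫ x in (0:ℝ)..Real.pi, F1 x)
        + (2⁻¹ * e1) * (∫ x in (0:ℝ)..Real.pi, F3 x)
        + (2⁻¹ * e2) * (∫ x in (0:ℝ)..Real.pi, F2 x)
        + (2⁻¹ * e2) * (∫ x in (0:ℝ)..Real.pi, F4 x) := by
    rw [intervalIntegral.integral_congr hpt]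
    rw [intervalIntegral.integral_add
        (f := fun x => 2⁻¹ * e1 * F1 x + 2⁻¹ * e1 * F3 x + 2⁻¹ * e2 * F2 x)
        (g := fun x => 2⁻¹ * e2 * F4 x)
        ((((continuous_const.mul hF1c).add (continuous_const.mul hF3c)).add
          (continuous_const.mul hF2c)).intervalIntegrable _ _)
        ((continuous_const.mul hF4c).intervalIntegrable _ _),
      intervalIntegral.integral_add
        (f := fun x => 2⁻¹ * e1 * F1 x + 2⁻¹ * e1 * F3 x) (g := fun x => 2⁻¹ * e2 * F2 x)
        (((continuous_const.mul hF1c).add (continuous_const.mul hF3c)).intervalIntegrable _ _)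
        ((continuous_const.mul hF2c).intervalIntegrable _ _),
      intervalIntegral.integral_add
        (f := fun x => 2⁻¹ * e1 * F1 x) (g := fun x => 2⁻¹ * e1 * F3 x)
        ((continuous_const.mul hF1c).intervalIntegrable _ _)
        ((continuous_const.mul hF3c).intervalIntegrable _ _),
      intervalIntegral.integral_const_mul, intervalIntegral.integral_const_mul,
      intervalIntegral.integral_const_mul, intervalIntegral.integral_const_mul]
  -- Step 4 : evaluate the four integrals
  have hI1 : (∫ x in (0:ℝ)..Real.pi, F1 x)
      = ftilde v (-l) * ftildeStar v (-l) - PhiFun v (-l) := by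
    rw [hF1def, ftilde_eq hv, ftildeStar_eq hv, Phi_eq hv, star_key hv (-l)]
  have hI2 : (∫ x in (0:ℝ)..Real.pi, F2 x)
      = ftilde v l * ftildeStar v l - PhiFun v l := by
    rw [hF2def, ftilde_eq hv, ftildeStar_eq hv, Phi_eq hv, star_key hv l]
  have hI3 : (∫ x in (0:ℝ)..Real.pi, F3 x) = PhiFun v l := by
    rw [hF3def, J_key hv l]
  have hI4 : (∫ x in (0:ℝ)..Real.pi, F4 x) = PhiFun v (-l) := by
    rw [hF4def, J_key hv (-l)]
  rw [hstep1, hsum, hI1, hI2, hI3, hI4]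
  -- Step 5 : algebra
  have hsin : Complex.sin ((Real.pi : ℂ) * l / 2) = Complex.sin (l * (Real.pi : ℂ) / 2) := by
    rw [mul_comm]
  have h1 : e1 * Complex.exp (-Complex.I * l * Real.pi) = e2 := by
    rw [he1, he2, ← Complex.exp_add]
    congr 1
    ring
  have h2 : e2 * Complex.exp (Complex.I * l * Real.pi) = e1 := by
    rw [he1, he2, ← Complex.exp_add]
    congr 1
    ring
  rw [hsin]
  have hne : (2 : ℂ) * l * Complex.sin (l * (Real.pi : ℂ) / 2) ≠ 0 := by
    simp [hl, hs]
  have hne4 : (4 : ℂ) * l * Complex.sin (l * (Real.pi : ℂ) / 2) ≠ 0 := by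
    simp [hl, hs]
  have hbr : e1 * (ftilde v (-l) * ftildeStar v (-l)
        - (1 - Complex.exp (-Complex.I * l * Real.pi)) * PhiFun v (-l))
      + e2 * (ftilde v l * ftildeStar v l
        - (1 - Complex.exp (Complex.I * l * Real.pi)) * PhiFun v l)
      = e1 * (ftilde v (-l) * ftildeStar v (-l) - PhiFun v (-l)) + e1 * PhiFun v l
        + e2 * (ftilde v l * ftildeStar v l - PhiFun v l) + e2 * PhiFun v (-l) := by
    linear_combination PhiFun v (-l) * h1 + PhiFun v l * h2
  rw [hbr]
  field_simp
  ring_nf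


theorem stmt13 (v : ℝ → ℂ) (hv : ContinuousOn v (Set.Icc 0 Real.pi))
    (l : ℂ) (hl : l ≠ 0) (hs : Complex.sin (l * Real.pi / 2) ≠ 0) :
    ∫ x in (0:ℝ)..Real.pi, resolventFun v l x * (starRingEnd ℂ) (v x)
      = -(1 / (4 * l * Complex.sin (l * Real.pi / 2))) *
        (Complex.exp (Complex.I * l * Real.pi / 2) *
            (ftilde v (-l) * ftildeStar v (-l)
              - (1 - Complex.exp (-Complex.I * l * Real.pi)) * PhiFun v (-l))
          + Complex.exp (-Complex.I * l * Real.pi / 2) *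
            (ftilde v l * ftildeStar v l
              - (1 - Complex.exp (Complex.I * l * Real.pi)) * PhiFun v l)) := by
  set w : ℝ → ℂ := fun x => v (min (max x 0) Real.pi) with hw
  have hmem : ∀ x : ℝ, min (max x 0) Real.pi ∈ Set.Icc (0:ℝ) Real.pi := fun x =>
    ⟨le_min (le_max_right x 0) Real.pi_pos.le, min_le_right _ _⟩
  have hwc : Continuous w :=
    hv.comp_continuous ((continuous_id.max continuous_const).min continuous_const) hmem
  have heq : Set.EqOn v w (Set.Icc 0 Real.pi) := by
    intro x hx
    simp only [hw]
    rw [max_eq_left hx.1, min_eq_left hx.2]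
  have hIcc : Set.uIcc (0:ℝ) Real.pi = Set.Icc 0 Real.pi := Set.uIcc_of_le Real.pi_pos.le
  have hsubI : ∀ x : ℝ, x ∈ Set.Icc (0:ℝ) Real.pi → Set.uIcc (0:ℝ) x ⊆ Set.Icc 0 Real.pi := by
    intro x hx
    rw [Set.uIcc_of_le hx.1]
    exact Set.Icc_subset_Icc le_rfl hx.2
  have hsubI2 : ∀ x : ℝ, x ∈ Set.Icc (0:ℝ) Real.pi →
      Set.uIcc x Real.pi ⊆ Set.Icc 0 Real.pi := by
    intro x hx
    rw [Set.uIcc_of_le hx.2]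
    exact Set.Icc_subset_Icc hx.1 le_rfl
  have hft : ∀ μ : ℂ, ftilde v μ = ftilde w μ := by
    intro μ
    rw [ftilde, ftilde]
    apply intervalIntegral.integral_congr
    intro x hx
    rw [hIcc] at hx
    beta_reduce
    rw [heq hx]
  have hfts : ∀ μ : ℂ, ftildeStar v μ = ftildeStar w μ := by
    intro μ
    rw [ftildeStar, ftildeStar, hft]
  have hphi : ∀ μ : ℂ, PhiFun v μ = PhiFun w μ := by
    intro μ
    rw [PhiFun, PhiFun]
    apply intervalIntegral.integral_congr
    intro x hx
    rw [hIcc] at hx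
    beta_reduce
    rw [heq hx]
    congr 1
    apply intervalIntegral.integral_congr
    intro t ht
    beta_reduce
    rw [heq (hsubI x hx ht)]
  have hres : (∫ x in (0:ℝ)..Real.pi, resolventFun v l x * (starRingEnd ℂ) (v x))
      = ∫ x in (0:ℝ)..Real.pi, resolventFun w l x * (starRingEnd ℂ) (w x) := by
    apply intervalIntegral.integral_congr
    intro x hx
    rw [hIcc] at hx
    beta_reduce
    rw [heq hx]
    congr 1
    rw [resolventFun, resolventFun]
    congr 2
    · apply intervalIntegral.integral_congr
      intro t ht
      beta_reduce
      rw [heq (hsubI x hx ht)]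
    · apply intervalIntegral.integral_congr
      intro t ht
      beta_reduce
      rw [heq (hsubI2 x hx ht)]
  rw [hres, hft, hft, hfts, hfts, hphi, hphi]
  exact stmt13_cont w hwc l hl hs
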